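/- There exists a universal constant C such that for every real A ≠ 1, the integral F(A) = ∫_{θ ∈ [-π,π), A + cos θ > 0} (A + cos θ)^{-1/2} dθ satisfies F(A) ≤ C(1 + ln(1 + 1/|A−1|)). -/

import Mathlib

open Real MeasureTheory

/- ## Auxiliary rpow/sqrt lemmas -/

lemma aux_rpow {x : ℝ} (hx : 0 ≤ x) : x ^ (-(1/2) : ℝ) = (Real.sqrt x)⁻¹ := by
  rw [Real.sqrt_eq_rpow, ← Real.rpow_neg hx]

lemma rpow_inv_le {x y : ℝ} (hx : 0 < x) (hxy : x ≤ y) :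
    y ^ (-(1/2):ℝ) ≤ x ^ (-(1/2):ℝ) :=
  Real.rpow_le_rpow_of_nonpos hx hxy (by norm_num)

lemma div_pi_sq {x : ℝ} (hx : 0 ≤ x) : (x / π^2) ^ (-(1/2):ℝ) = π * x ^ (-(1/2):ℝ) := by
  have hπ := Real.pi_pos
  rw [div_eq_mul_inv, Real.mul_rpow hx (by positivity), Real.inv_rpow (by positivity),
    aux_rpow (by positivity : (0:ℝ) ≤ π^2), Real.sqrt_sq hπ.le, inv_inv, mul_comm]

lemma sq_rpow {x : ℝ} (hx : 0 ≤ x) : (x^2) ^ (-(1/2):ℝ) = x⁻¹ := by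
  rw [aux_rpow (sq_nonneg x), Real.sqrt_sq hx]

lemma rpow_half_nonneg (x : ℝ) : 0 ≤ x ^ (-(1/2):ℝ) := by
  rcases le_or_gt 0 x with h | h
  · exact Real.rpow_nonneg h _
  · rw [Real.rpow_def_of_neg h, show (-(1/2):ℝ) * π = -(π/2) by ring, Real.cos_neg,
      Real.cos_pi_div_two, mul_zero]

/- ## Trigonometric inequalities -/

lemma key_cos {a b : ℝ} (h0 : 0 ≤ a) (hab : a ≤ b) (hb : b ≤ π) :
    (b - a) * max (b - a) (min b (π - b)) ≤ π ^ 2 * (Real.cos a - Real.cos b) := by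
  have hπ := Real.pi_pos
  set M := max (b - a) (min b (π - b)) with hM
  set s₁ := (a + b) / 2 with hs₁def
  have hcc : Real.cos a - Real.cos b = 2 * Real.sin s₁ * Real.sin ((b-a)/2) := by
    rw [Real.cos_sub_cos a b, show (a-b)/2 = -((b-a)/2) by ring, Real.sin_neg, hs₁def]; ring
  have hs2 : 2/π * ((b-a)/2) ≤ Real.sin ((b-a)/2) :=
    Real.mul_le_sin (by linarith) (by linarith)
  have hmin : (1/2) * M ≤ min s₁ (π - s₁) := by
    have h1 := min_le_left b (π - b); have h2 := min_le_right b (π - b)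
    rcases max_cases (b - a) (min b (π - b)) with ⟨h, _⟩ | ⟨h, _⟩ <;> rw [hM, h] <;>
      refine le_min (by rw [hs₁def]; linarith) (by rw [hs₁def]; linarith)
  have hs1 : 2/π * min s₁ (π - s₁) ≤ Real.sin s₁ := by
    rcases le_total s₁ (π/2) with h | h
    · calc 2/π * min s₁ (π - s₁) ≤ 2/π * s₁ :=
            mul_le_mul_of_nonneg_left (min_le_left _ _) (by positivity)
      _ ≤ Real.sin s₁ := Real.mul_le_sin (by rw [hs₁def]; linarith) h
    · calc 2/π * min s₁ (π - s₁) ≤ 2/π * (π - s₁) :=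
            mul_le_mul_of_nonneg_left (min_le_right _ _) (by positivity)
      _ ≤ Real.sin (π - s₁) := Real.mul_le_sin (by linarith) (by linarith)
      _ = Real.sin s₁ := Real.sin_pi_sub s₁
  have hM0 : 0 ≤ M := le_trans (by linarith) (le_max_left _ _)
  have e1 : b - a ≤ π * Real.sin ((b-a)/2) := by
    calc b - a = π * (2/π * ((b-a)/2)) := by field_simp
    _ ≤ π * Real.sin ((b-a)/2) := mul_le_mul_of_nonneg_left hs2 hπ.le
  have e2 : M ≤ π * Real.sin s₁ := by
    calc M = π * (2/π * ((1/2) * M)) := by field_simp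
    _ ≤ π * (2/π * min s₁ (π - s₁)) := by
        apply mul_le_mul_of_nonneg_left (mul_le_mul_of_nonneg_left hmin (by positivity)) hπ.le
    _ ≤ π * Real.sin s₁ := mul_le_mul_of_nonneg_left hs1 hπ.le
  have hprod : (b - a) * M ≤ (π * Real.sin ((b-a)/2)) * (π * Real.sin s₁) :=
    mul_le_mul e1 e2 hM0 (le_trans (by linarith) e1)
  rw [hcc]; nlinarith [hprod]

lemma key_cos2 {θ : ℝ} (hθ : |θ| ≤ π) : (π - |θ|)^2 ≤ π^2/2 * (1 + Real.cos θ) := by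
  have hπ := Real.pi_pos
  have h0 : 0 ≤ |θ| := abs_nonneg θ
  have hcos : Real.cos θ = Real.cos |θ| := (Real.cos_abs θ).symm
  have h1 : 1 + Real.cos |θ| = 2 * Real.sin ((π - |θ|)/2) ^ 2 := by
    have h2 : Real.sin ((π - |θ|)/2) = Real.cos (|θ|/2) := by
      rw [show (π - |θ|)/2 = π/2 - |θ|/2 by ring, Real.sin_pi_div_two_sub]
    have h3 := Real.cos_sq (|θ|/2)
    rw [show 2 * (|θ|/2) = |θ| by ring] at h3
    rw [h2]; nlinarith [h3]
  have hj : 2/π * ((π - |θ|)/2) ≤ Real.sin ((π - |θ|)/2) :=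
    Real.mul_le_sin (by linarith) (by linarith)
  have e : π - |θ| ≤ π * Real.sin ((π - |θ|)/2) := by
    calc π - |θ| = π * (2/π * ((π - |θ|)/2)) := by field_simp
    _ ≤ π * Real.sin ((π - |θ|)/2) := mul_le_mul_of_nonneg_left hj hπ.le
  have hsn : 0 ≤ Real.sin ((π - |θ|)/2) :=
    Real.sin_nonneg_of_nonneg_of_le_pi (by linarith) (by linarith)
  rw [hcos, h1]
  nlinarith [mul_le_mul e e (by linarith) (mul_nonneg hπ.le hsn)]

lemma key_cos3 {b : ℝ} (h0 : 0 ≤ b) (hb : b ≤ π) : 1 + Real.cos b ≤ (π - b)^2 / 2 := by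
  have h1 : 1 + Real.cos b = 2 * Real.sin ((π - b)/2) ^ 2 := by
    have h2 : Real.sin ((π - b)/2) = Real.cos (b/2) := by
      rw [show (π - b)/2 = π/2 - b/2 by ring, Real.sin_pi_div_two_sub]
    have h3 := Real.cos_sq (b/2)
    rw [show 2 * (b/2) = b by ring] at h3
    rw [h2]; nlinarith [h3]
  have hs := Real.sin_le (by linarith : 0 ≤ (π - b)/2)
  have hs0 : 0 ≤ Real.sin ((π - b)/2) :=
    Real.sin_nonneg_of_nonneg_of_le_pi (by linarith) (by linarith)
  rw [h1]; nlinarith [hs, hs0]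

/- ## Pointwise majorant bounds -/

lemma pointwise1 {A : ℝ} (hA : 1 < A) {δ : ℝ} (hδ0 : 0 < δ)
    {θ : ℝ} (hθ : |θ| ≤ π) :
    (A + Real.cos θ) ^ (-(1/2):ℝ) ≤
      (if π - θ < δ then (Real.sqrt (A-1))⁻¹ else π/(π - θ)) +
      (if π + θ < δ then (Real.sqrt (A-1))⁻¹ else π/(π + θ)) := by
  have hπ := Real.pi_pos
  have hε : 0 < A - 1 := by linarith
  set H : ℝ → ℝ := fun t => if t < δ then (Real.sqrt (A-1))⁻¹ else π / t with hH
  show (A + Real.cos θ) ^ (-(1/2):ℝ) ≤ H (π - θ) + H (π + θ)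
  have hHnn : ∀ t, 0 ≤ H t := by
    intro t
    simp only [hH]
    split_ifs with h
    · positivity
    · have : 0 < t := lt_of_lt_of_le hδ0 (not_lt.1 h)
      positivity
  have hmain : (A + Real.cos θ) ^ (-(1/2):ℝ) ≤ H (π - |θ|) := by
    simp only [hH]
    split_ifs with h
    · calc (A + Real.cos θ) ^ (-(1/2):ℝ) ≤ (A - 1) ^ (-(1/2):ℝ) :=
            rpow_inv_le hε (by nlinarith [Real.neg_one_le_cos θ])
      _ = (Real.sqrt (A-1))⁻¹ := aux_rpow hε.le
    · have ht : δ ≤ π - |θ| := not_lt.1 h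
      have ht0 : 0 < π - |θ| := lt_of_lt_of_le hδ0 ht
      have h2 : (π - |θ|)^2 / π^2 ≤ A + Real.cos θ := by
        rw [div_le_iff₀ (by positivity)]
        nlinarith [key_cos2 hθ, Real.neg_one_le_cos θ, mul_pos hπ hπ]
      calc (A + Real.cos θ) ^ (-(1/2):ℝ) ≤ ((π - |θ|)^2 / π^2) ^ (-(1/2):ℝ) :=
            rpow_inv_le (by positivity) h2
      _ = π * ((π - |θ|)^2) ^ (-(1/2):ℝ) := div_pi_sq (sq_nonneg _)
      _ = π * (π - |θ|)⁻¹ := by rw [sq_rpow ht0.le]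
      _ = π / (π - |θ|) := by rw [div_eq_mul_inv]
  rcases abs_cases θ with ⟨h1, _⟩ | ⟨h1, _⟩
  · rw [h1] at hmain; linarith [hHnn (π + θ)]
  · rw [h1, sub_neg_eq_add] at hmain; linarith [hHnn (π - θ)]

lemma pointwise2 {b : ℝ} (hb0 : 0 < b) (hbπ : b < π) {θ : ℝ} (hθ : |θ| < b) :
    (Real.cos θ - Real.cos b) ^ (-(1/2):ℝ) ≤
      (if b - θ < min b (π - b) then (π / Real.sqrt (min b (π - b))) * (b - θ) ^ (-(1/2):ℝ)
        else π/(b - θ)) +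
      (if b + θ < min b (π - b) then (π / Real.sqrt (min b (π - b))) * (b + θ) ^ (-(1/2):ℝ)
        else π/(b + θ)) := by
  have hπ := Real.pi_pos
  set d : ℝ := min b (π - b) with hd
  have hd0 : 0 < d := lt_min hb0 (by linarith)
  set H : ℝ → ℝ := fun t => if t < d then (π / Real.sqrt d) * t ^ (-(1/2):ℝ) else π / t with hH
  show (Real.cos θ - Real.cos b) ^ (-(1/2):ℝ) ≤ H (b - θ) + H (b + θ)
  have hHnn : ∀ t, 0 ≤ t → 0 ≤ H t := by
    intro t ht
    simp only [hH]
    split_ifs with h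
    · exact mul_nonneg (by positivity) (Real.rpow_nonneg ht _)
    · have : 0 < t := lt_of_lt_of_le hd0 (not_lt.1 h)
      positivity
  set a : ℝ := |θ| with ha
  have h0a : 0 ≤ a := abs_nonneg θ
  have hab : a < b := hθ
  have key := key_cos h0a hab.le hbπ.le
  have hMpos : 0 < max (b - a) d := lt_of_lt_of_le (by linarith) (le_max_left _ _)
  have hpos : 0 < (b - a) * max (b - a) d := mul_pos (by linarith) hMpos
  have hcpos : 0 < Real.cos a - Real.cos b := by nlinarith [mul_pos hπ hπ]
  have h2 : (b - a) * max (b - a) d / π^2 ≤ Real.cos a - Real.cos b := by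
    rw [div_le_iff₀ (by positivity)]
    nlinarith [key]
  have hca : Real.cos θ = Real.cos a := (Real.cos_abs θ).symm
  have hmain : (Real.cos θ - Real.cos b) ^ (-(1/2):ℝ) ≤ H (b - a) := by
    rw [hca]; simp only [hH]
    have step : (Real.cos a - Real.cos b) ^ (-(1/2):ℝ)
        ≤ π * ((b - a) * max (b - a) d) ^ (-(1/2):ℝ) := by
      calc (Real.cos a - Real.cos b) ^ (-(1/2):ℝ)
          ≤ ((b - a) * max (b - a) d / π^2) ^ (-(1/2):ℝ) := rpow_inv_le (by positivity) h2
      _ = π * ((b - a) * max (b - a) d) ^ (-(1/2):ℝ) := div_pi_sq hpos.le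
    split_ifs with h
    · have hmax : max (b - a) d = d := max_eq_right h.le
      rw [hmax] at step
      calc (Real.cos a - Real.cos b) ^ (-(1/2):ℝ) ≤ π * ((b - a) * d) ^ (-(1/2):ℝ) := step
      _ = π * ((b - a) ^ (-(1/2):ℝ) * d ^ (-(1/2):ℝ)) := by
          rw [Real.mul_rpow (by linarith) hd0.le]
      _ = π / Real.sqrt d * (b - a) ^ (-(1/2):ℝ) := by
          rw [aux_rpow hd0.le, div_eq_mul_inv]; ring
    · have hmax : max (b - a) d = b - a := max_eq_left (not_lt.1 h)
      rw [hmax] at step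
      calc (Real.cos a - Real.cos b) ^ (-(1/2):ℝ) ≤ π * ((b - a) * (b - a)) ^ (-(1/2):ℝ) := step
      _ = π * ((b - a)^2) ^ (-(1/2):ℝ) := by rw [sq]
      _ = π * (b - a)⁻¹ := by rw [sq_rpow (by linarith)]
      _ = π / (b - a) := by rw [div_eq_mul_inv]
  have hb1 : 0 ≤ b - θ := by rcases abs_lt.1 hθ with ⟨_, h⟩; linarith
  have hb2 : 0 ≤ b + θ := by rcases abs_lt.1 hθ with ⟨h, _⟩; linarith
  rcases abs_cases θ with ⟨h1, _⟩ | ⟨h1, _⟩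
  · rw [ha, h1] at hmain; linarith [hHnn (b + θ) hb2]
  · rw [ha, h1, sub_neg_eq_add] at hmain; linarith [hHnn (b - θ) hb1]

/- ## Integration lemmas -/

lemma majorant_int {g : ℝ → ℝ} {d c : ℝ} (hd : 0 < d) (hdc : d ≤ c)
    (hgi : IntervalIntegrable g volume 0 d) :
    IntervalIntegrable (fun t => if t < d then g t else π / t) volume 0 c ∧
      ∫ t in (0:ℝ)..c, (if t < d then g t else π / t)
        = (∫ t in (0:ℝ)..d, g t) + π * Real.log (c/d) := by
  set F : ℝ → ℝ := fun t => if t < d then g t else π / t with hF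
  have heq1' : g =ᵐ[volume.restrict (Set.uIoc 0 d)] F := by
    have hsing : volume ({d} : Set ℝ) = 0 := volume_singleton
    refine ((ae_restrict_iff' measurableSet_uIoc).2 ?_)
    filter_upwards [measure_eq_zero_iff_ae_notMem.1 hsing] with t ht hmem
    rw [Set.uIoc_of_le hd.le] at hmem
    have : t < d := lt_of_le_of_ne hmem.2 ht
    simp [hF, this]
  have hFi1 : IntervalIntegrable F volume 0 d := hgi.congr_ae heq1'
  have hcont : ContinuousOn (fun t : ℝ => π / t) (Set.uIcc d c) :=
    continuousOn_const.div continuousOn_id (fun t ht => by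
      rw [Set.uIcc_of_le hdc] at ht
      exact ne_of_gt (lt_of_lt_of_le hd ht.1))
  have heq2 : Set.EqOn (fun t : ℝ => π / t) F (Set.uIcc d c) := by
    intro t ht
    rw [Set.uIcc_of_le hdc] at ht
    simp [hF, not_lt.2 ht.1]
  have heq2' : (fun t : ℝ => π / t) =ᵐ[volume.restrict (Set.uIoc d c)] F := by
    filter_upwards [ae_restrict_mem measurableSet_uIoc] with t ht
    exact heq2 (Set.uIoc_subset_uIcc ht)
  have hFi2 : IntervalIntegrable F volume d c := (hcont.intervalIntegrable).congr_ae heq2'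
  constructor
  · rw [intervalIntegrable_iff_integrableOn_Ioc_of_le (hd.le.trans hdc),
      show Set.Ioc (0:ℝ) c = Set.Ioc 0 d ∪ Set.Ioc d c by rw [Set.Ioc_union_Ioc_eq_Ioc hd.le hdc]]
    refine IntegrableOn.union ?_ ?_
    · exact (intervalIntegrable_iff_integrableOn_Ioc_of_le hd.le).1 hFi1
    · exact (intervalIntegrable_iff_integrableOn_Ioc_of_le hdc).1 hFi2
  · rw [← intervalIntegral.integral_add_adjacent_intervals hFi1 hFi2]
    congr 1
    · exact intervalIntegral.integral_congr_ae ((ae_restrict_iff' measurableSet_uIoc).1 heq1'.symm)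
    · rw [← intervalIntegral.integral_congr heq2]
      simp_rw [div_eq_mul_one_div π]
      rw [intervalIntegral.integral_const_mul, integral_one_div (by
        rw [Set.uIcc_of_le hdc]
        intro h
        exact absurd h.1 (not_le.2 hd))]

lemma sym_int {G : ℝ → ℝ} {b : ℝ} (hb : 0 < b) (hGi : IntervalIntegrable G volume 0 (2*b)) :
    ∫ θ in Set.Ioc (-b) b, (G (b - θ) + G (b + θ)) = 2 * ∫ t in (0:ℝ)..(2*b), G t := by
  have h1 : IntervalIntegrable (fun x => G (b - x)) volume (-b) b := by
    have h := (hGi.comp_sub_left b).symm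
    rw [show b - 2*b = -b by ring, show b - 0 = b by ring] at h
    exact h
  have h2 : IntervalIntegrable (fun x => G (b + x)) volume (-b) b := by
    have h := hGi.comp_add_left b
    rw [show (0:ℝ) - b = -b by ring, show 2*b - b = b by ring] at h
    exact h
  rw [← intervalIntegral.integral_of_le (by linarith : -b ≤ b),
    intervalIntegral.integral_add h1 h2,
    intervalIntegral.integral_comp_sub_left G b,
    intervalIntegral.integral_comp_add_left G b]
  rw [show b - -b = 2*b by ring, show b - b = 0 by ring, show b + -b = 0 by ring,
    show b + b = 2*b by ring]
  ring

lemma int_g {d : ℝ} (hd : 0 < d) :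
    ∫ t in (0:ℝ)..d, (π / Real.sqrt d) * t ^ (-(1/2):ℝ) = 2*π := by
  have hs : 0 < Real.sqrt d := Real.sqrt_pos.2 hd
  rw [intervalIntegral.integral_const_mul, integral_rpow (Or.inl (by norm_num))]
  rw [show (-(1/2) + 1 : ℝ) = 1/2 by norm_num, Real.zero_rpow (by norm_num),
    ← Real.sqrt_eq_rpow]
  field_simp
  ring

lemma log_bound {ε r : ℝ} (hε : 0 < ε) (hr : 0 < r) (h : r ≤ 2*π * Real.sqrt (1 + 1/ε)) :
    Real.log r ≤ Real.log (2*π) + (1/2) * Real.log (1 + 1/ε) := by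
  have h1 : (0:ℝ) < 1 + 1/ε := by positivity
  have h2 : Real.log r ≤ Real.log (2*π * Real.sqrt (1 + 1/ε)) := Real.log_le_log hr h
  rw [Real.log_mul (by positivity) (by positivity), Real.log_sqrt h1.le] at h2
  linarith

/- ## Main theorem -/

set_option maxHeartbeats 2000000 in
theorem stmt_1 :
    ∃ C : ℝ, ∀ A : ℝ, A ≠ 1 →
      ∫ θ in {θ : ℝ | θ ∈ Set.Ico (-π) π ∧ 0 < A + Real.cos θ},
        (A + Real.cos θ) ^ (-(1/2) : ℝ) ≤ C * (1 + Real.log (1 + 1 / |A - 1|)) := by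
  have hπ := Real.pi_pos
  have hπ3 := Real.pi_gt_three
  have hlog2π : 0 ≤ Real.log (2*π) := Real.log_nonneg (by linarith)
  refine ⟨2 + 4*π + 2*π*Real.log (2*π), fun A hA => ?_⟩
  have hε0 : 0 < |A - 1| := abs_pos.2 (sub_ne_zero.2 hA)
  have hL0 : 0 ≤ Real.log (1 + 1/|A - 1|) := Real.log_nonneg (by
    have : 0 ≤ 1/|A-1| := by positivity
    linarith)
  set L := Real.log (1 + 1/|A - 1|) with hLdef
  rcases le_or_gt A (-1) with hAle | hAgt
  · -- empty set
    have hempty : {θ : ℝ | θ ∈ Set.Ico (-π) π ∧ 0 < A + Real.cos θ} = ∅ := by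
      ext θ
      simp only [Set.mem_setOf_eq, Set.mem_empty_iff_false, iff_false, not_and]
      intro _
      nlinarith [Real.cos_le_one θ]
    rw [hempty]
    simp only [Measure.restrict_empty, integral_zero_measure]
    have : 0 ≤ 2 + 4*π + 2*π*Real.log (2*π) := by positivity
    nlinarith
  rcases lt_or_lt_iff_ne.2 hA with hAlt | hAgt1
  · -- case -1 < A < 1
    set b := Real.arccos (-A) with hbdef
    have hcosb : Real.cos b = -A := Real.cos_arccos (by linarith) (by linarith)
    have hb0 : 0 < b := Real.arccos_pos.2 (by linarith)
    have hbπ : b < π := lt_of_le_of_ne (Real.arccos_le_pi _) (fun h => by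
      rw [h, Real.cos_pi] at hcosb
      linarith)
    set d : ℝ := min b (π - b) with hddef
    have hd0 : 0 < d := lt_min hb0 (by linarith)
    have hdb : d ≤ b := min_le_left _ _
    have hεeq : |A - 1| = 1 + Real.cos b := by
      rw [hcosb, abs_of_neg (by linarith)]; ring
    -- the domain is Ioo (-b) b
    have hset : {θ : ℝ | θ ∈ Set.Ico (-π) π ∧ 0 < A + Real.cos θ} = Set.Ioo (-b) b := by
      ext θ
      simp only [Set.mem_setOf_eq, Set.mem_Ico, Set.mem_Ioo]
      constructor
      · rintro ⟨⟨h1, h2⟩, h3⟩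
        have habs : |θ| ≤ π := abs_le.2 ⟨h1, h2.le⟩
        have hlt : |θ| < b := by
          by_contra hcon
          have := Real.cos_le_cos_of_nonneg_of_le_pi hb0.le habs (not_lt.1 hcon)
          rw [Real.cos_abs] at this
          rw [hcosb] at this
          linarith
        exact abs_lt.1 hlt
      · rintro ⟨h1, h2⟩
        have habs : |θ| < b := abs_lt.2 ⟨h1, h2⟩
        refine ⟨⟨by linarith, by linarith⟩, ?_⟩
        have h5 : Real.cos b < Real.cos |θ| :=
          Real.cos_lt_cos_of_nonneg_of_le_pi (abs_nonneg θ) hbπ.le habs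
        rw [Real.cos_abs] at h5
        rw [hcosb] at h5
        linarith
    set H : ℝ → ℝ := fun t => if t < d then (π / Real.sqrt d) * t ^ (-(1/2):ℝ) else π / t with hH
    have hgi : IntervalIntegrable (fun t : ℝ => (π / Real.sqrt d) * t ^ (-(1/2):ℝ)) volume 0 d :=
      (intervalIntegral.intervalIntegrable_rpow' (by norm_num)).const_mul _
    obtain ⟨hHint, hHval⟩ := majorant_int (g := fun t : ℝ => (π / Real.sqrt d) * t ^ (-(1/2):ℝ))
      hd0 (by linarith : d ≤ 2*b) hgi
    rw [← hH] at hHint hHval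
    have hfun : ∀ θ : ℝ, A + Real.cos θ = Real.cos θ - Real.cos b := by
      intro θ; rw [hcosb]; ring
    have hmono : ∫ θ in Set.Ioo (-b) b, (A + Real.cos θ) ^ (-(1/2):ℝ)
        ≤ ∫ θ in Set.Ioo (-b) b, (H (b - θ) + H (b + θ)) := by
      have hint1 : IntegrableOn (fun θ : ℝ => H (b - θ)) (Set.Ioo (-b) b) volume := by
        have h := (hHint.comp_sub_left b).symm
        rw [show b - 2*b = -b by ring, show b - 0 = b by ring] at h
        exact ((intervalIntegrable_iff_integrableOn_Ioc_of_le (by linarith : -b ≤ b)).1 h).mono_set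
          Set.Ioo_subset_Ioc_self
      have hint2 : IntegrableOn (fun θ : ℝ => H (b + θ)) (Set.Ioo (-b) b) volume := by
        have h := hHint.comp_add_left b
        rw [show (0:ℝ) - b = -b by ring, show 2*b - b = b by ring] at h
        exact ((intervalIntegrable_iff_integrableOn_Ioc_of_le (by linarith : -b ≤ b)).1 h).mono_set
          Set.Ioo_subset_Ioc_self
      apply integral_mono_of_nonneg
      · filter_upwards with θ
        exact rpow_half_nonneg _
      · exact hint1.add hint2
      · refine (ae_restrict_iff' measurableSet_Ioo).2 (Filter.Eventually.of_forall fun θ hθ => ?_)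
        show (A + Real.cos θ) ^ (-(1/2):ℝ) ≤ H (b - θ) + H (b + θ)
        rw [hfun θ]
        exact pointwise2 hb0 hbπ (abs_lt.2 ⟨hθ.1, hθ.2⟩)
    -- log estimate
    have hr : 2*b/d ≤ 2*π * Real.sqrt (1 + 1/|A - 1|) := by
      have hs1 : (1:ℝ) ≤ Real.sqrt (1 + 1/|A - 1|) := Real.one_le_sqrt.2 (by
        have : 0 ≤ 1/|A-1| := by positivity
        linarith)
      rcases min_cases b (π - b) with ⟨hm, hm2⟩ | ⟨hm, hm2⟩
      · have hdeq : d = b := by rw [hddef, hm]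
        rw [hdeq, div_le_iff₀ hb0]
        have h6 : (2:ℝ) ≤ 2*π*Real.sqrt (1 + 1/|A - 1|) := by nlinarith [hs1, hπ3]
        nlinarith [mul_le_mul_of_nonneg_right h6 hb0.le]
      · have hdeq : d = π - b := by rw [hddef, hm]
        have hd2 : Real.sqrt (2*|A - 1|) ≤ d := by
          have h1 : 2*|A - 1| ≤ d^2 := by
            rw [hdeq]
            nlinarith [key_cos3 hb0.le hbπ.le, hεeq]
          calc Real.sqrt (2*|A - 1|) ≤ Real.sqrt (d^2) := Real.sqrt_le_sqrt h1
          _ = d := Real.sqrt_sq hd0.le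
        rw [div_le_iff₀ hd0]
        have hprod : Real.sqrt (1 + 1/|A - 1|) * Real.sqrt (2*|A - 1|)
            = Real.sqrt ((1 + 1/|A - 1|) * (2*|A - 1|)) :=
          (Real.sqrt_mul (by positivity) _).symm
        have harith : (1 + 1/|A - 1|) * (2*|A - 1|) = 2*|A - 1| + 2 := by
          field_simp
        have h1' : (1:ℝ) ≤ Real.sqrt ((1 + 1/|A - 1|) * (2*|A - 1|)) :=
          Real.one_le_sqrt.2 (by rw [harith]; linarith)
        calc 2*b ≤ 2*π := by linarith
        _ ≤ 2*π * Real.sqrt ((1 + 1/|A - 1|) * (2*|A - 1|)) := by nlinarith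
        _ = 2*π * (Real.sqrt (1 + 1/|A - 1|) * Real.sqrt (2*|A - 1|)) := by rw [hprod]
        _ ≤ 2*π * (Real.sqrt (1 + 1/|A - 1|) * d) := by
            apply mul_le_mul_of_nonneg_left
              (mul_le_mul_of_nonneg_left hd2 (Real.sqrt_nonneg _)) (by positivity)
        _ = 2*π * Real.sqrt (1 + 1/|A - 1|) * d := by ring
    have hlog : Real.log (2*b/d) ≤ Real.log (2*π) + (1/2) * L :=
      log_bound hε0 (by positivity) hr
    rw [hset, ← integral_Ioc_eq_integral_Ioo]
    calc ∫ θ in Set.Ioc (-b) b, (A + Real.cos θ) ^ (-(1/2):ℝ)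
        ≤ ∫ θ in Set.Ioc (-b) b, (H (b - θ) + H (b + θ)) := by
          rw [integral_Ioc_eq_integral_Ioo, integral_Ioc_eq_integral_Ioo
            (f := fun θ => H (b - θ) + H (b + θ))]
          exact hmono
    _ = 2 * ∫ t in (0:ℝ)..(2*b), H t := sym_int hb0 hHint
    _ = 2 * (2*π + π * Real.log (2*b/d)) := by rw [hHval, int_g hd0]
    _ ≤ (2 + 4*π + 2*π*Real.log (2*π)) * (1 + L) := by
        nlinarith [hlog, hL0, hπ, hlog2π, mul_nonneg hL0 hlog2π, mul_nonneg hL0 hπ.le]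
  · -- case 1 < A
    have hε : 0 < A - 1 := by linarith
    have habs : |A - 1| = A - 1 := abs_of_pos hε
    set δ : ℝ := min (Real.sqrt (A-1)) (2*π) with hδdef
    have hδ0 : 0 < δ := lt_min (Real.sqrt_pos.2 hε) (by linarith)
    have hδ2π : δ ≤ 2*π := min_le_right _ _
    set H : ℝ → ℝ := fun t => if t < δ then (Real.sqrt (A-1))⁻¹ else π / t with hH
    obtain ⟨hHint, hHval⟩ := majorant_int (g := fun _ : ℝ => (Real.sqrt (A-1))⁻¹)
      hδ0 hδ2π intervalIntegrable_const
    rw [← hH] at hHint hHval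
    have hset : {θ : ℝ | θ ∈ Set.Ico (-π) π ∧ 0 < A + Real.cos θ} = Set.Ico (-π) π := by
      ext θ
      simp only [Set.mem_setOf_eq, and_iff_left_iff_imp]
      intro _
      nlinarith [Real.neg_one_le_cos θ]
    have hmono : ∫ θ in Set.Ioo (-π) π, (A + Real.cos θ) ^ (-(1/2):ℝ)
        ≤ ∫ θ in Set.Ioo (-π) π, (H (π - θ) + H (π + θ)) := by
      have hint1 : IntegrableOn (fun θ : ℝ => H (π - θ)) (Set.Ioo (-π) π) volume := by
        have h := (hHint.comp_sub_left π).symm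
        rw [show π - 2*π = -π by ring, show π - 0 = π by ring] at h
        exact ((intervalIntegrable_iff_integrableOn_Ioc_of_le (by linarith : -π ≤ π)).1 h).mono_set
          Set.Ioo_subset_Ioc_self
      have hint2 : IntegrableOn (fun θ : ℝ => H (π + θ)) (Set.Ioo (-π) π) volume := by
        have h := hHint.comp_add_left π
        rw [show (0:ℝ) - π = -π by ring, show 2*π - π = π by ring] at h
        exact ((intervalIntegrable_iff_integrableOn_Ioc_of_le (by linarith : -π ≤ π)).1 h).mono_set
          Set.Ioo_subset_Ioc_self
      apply integral_mono_of_nonneg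
      · filter_upwards with θ
        exact rpow_half_nonneg _
      · exact hint1.add hint2
      · refine (ae_restrict_iff' measurableSet_Ioo).2 (Filter.Eventually.of_forall fun θ hθ => ?_)
        exact pointwise1 hAgt1 hδ0 (abs_le.2 ⟨hθ.1.le, hθ.2.le⟩)
    have hδε : δ * (Real.sqrt (A-1))⁻¹ ≤ 1 := by
      rw [← div_eq_mul_inv]
      exact div_le_one_of_le₀ (min_le_left _ _) (Real.sqrt_nonneg _)
    have hr : 2*π/δ ≤ 2*π * Real.sqrt (1 + 1/|A - 1|) := by
      have hs1 : (1:ℝ) ≤ Real.sqrt (1 + 1/|A - 1|) := Real.one_le_sqrt.2 (by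
        have : 0 ≤ 1/|A-1| := by positivity
        linarith)
      rcases min_cases (Real.sqrt (A-1)) (2*π) with ⟨hm, hm2⟩ | ⟨hm, hm2⟩
      · have hdeq : δ = Real.sqrt (A-1) := by rw [hδdef, hm]
        rw [hdeq, div_le_iff₀ (Real.sqrt_pos.2 hε)]
        have hprod : Real.sqrt (1 + 1/|A - 1|) * Real.sqrt (A-1)
            = Real.sqrt ((1 + 1/|A - 1|) * (A-1)) := (Real.sqrt_mul (by positivity) _).symm
        have harith : (1 + 1/|A - 1|) * (A-1) = (A-1) + 1 := by
          rw [habs]; field_simp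
        have h1' : (1:ℝ) ≤ Real.sqrt ((1 + 1/|A - 1|) * (A-1)) :=
          Real.one_le_sqrt.2 (by rw [harith]; linarith)
        calc 2*π = 2*π * 1 := by ring
        _ ≤ 2*π * Real.sqrt ((1 + 1/|A - 1|) * (A-1)) := by nlinarith
        _ = 2*π * (Real.sqrt (1 + 1/|A - 1|) * Real.sqrt (A-1)) := by rw [hprod]
        _ = 2*π * Real.sqrt (1 + 1/|A - 1|) * Real.sqrt (A-1) := by ring
      · have hdeq : δ = 2*π := by rw [hδdef, hm]
        rw [hdeq, div_self (by positivity : (2*π : ℝ) ≠ 0)]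
        nlinarith
    have hlog : Real.log (2*π/δ) ≤ Real.log (2*π) + (1/2) * L :=
      log_bound hε0 (by positivity) hr
    rw [hset, integral_Ico_eq_integral_Ioo, ← integral_Ioc_eq_integral_Ioo]
    calc ∫ θ in Set.Ioc (-π) π, (A + Real.cos θ) ^ (-(1/2):ℝ)
        ≤ ∫ θ in Set.Ioc (-π) π, (H (π - θ) + H (π + θ)) := by
          rw [integral_Ioc_eq_integral_Ioo, integral_Ioc_eq_integral_Ioo
            (f := fun θ => H (π - θ) + H (π + θ))]
          exact hmono
    _ = 2 * ∫ t in (0:ℝ)..(2*π), H t := sym_int hπ hHint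
    _ = 2 * (δ * (Real.sqrt (A-1))⁻¹ + π * Real.log (2*π/δ)) := by
        rw [hHval, intervalIntegral.integral_const, smul_eq_mul, sub_zero]
    _ ≤ (2 + 4*π + 2*π*Real.log (2*π)) * (1 + L) := by
        nlinarith [hlog, hδε, hL0, hπ, hlog2π, mul_nonneg hL0 hlog2π, mul_nonneg hL0 hπ.le]
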